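/- Let m ≥ 2 be even and a > 0. Let N = {z ∈ ℂ^m : there exist θ ∈ ℝ and u ∈ ℝ^m with z_k = e^{iθ} u_k for all k and u_1² + ⋯ + u_m² = a}. Then N is homeomorphic to S^{m−1} × S^1, the product of the (m−1)-dimensional sphere and the circle. -/

import Mathlib

namespace Stmt15

noncomputable section
open Complex Finset

variable {m : ℕ}

/-- even index of the pair containing `k` -/
def pI (k : Fin m) : Fin m := ⟨2 * (k.1 / 2), by have := k.2; omega⟩

/-- odd index of the pair containing `k` (needs `m` even) -/
def qI (hm : Even m) (k : Fin m) : Fin m :=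
  ⟨2 * (k.1 / 2) + 1, by have := k.2; obtain ⟨t, rfl⟩ := hm; omega⟩

def pairEquiv (hm : Even m) : Fin (m / 2) × Fin 2 ≃ Fin m where
  toFun x := ⟨2 * x.1.1 + x.2.1, by
    have h1 := x.1.2; have h2 := x.2.2; obtain ⟨t, rfl⟩ := hm; omega⟩
  invFun k := (⟨k.1 / 2, by have := k.2; obtain ⟨t, rfl⟩ := hm; omega⟩, ⟨k.1 % 2, by omega⟩)
  left_inv := by
    rintro ⟨⟨j, hj⟩, ⟨i, hi⟩⟩
    simp only [Prod.mk.injEq, Fin.mk.injEq]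
    omega
  right_inv := by
    rintro ⟨k, hk⟩
    simp only [Fin.mk.injEq]
    omega

@[simp] lemma pI_val (k : Fin m) : (pI k).1 = 2 * (k.1 / 2) := rfl
@[simp] lemma qI_val (hm : Even m) (k : Fin m) : (qI hm k).1 = 2 * (k.1 / 2) + 1 := rfl
@[simp] lemma pairEquiv_val (hm : Even m) (j : Fin (m / 2)) (i : Fin 2) :
    ((pairEquiv hm) (j, i)).1 = 2 * j.1 + i.1 := rfl

variable (hm : Even m)

lemma pI_pI (k : Fin m) : pI (pI k) = pI k := by ext; simp only [pI_val]; omega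
lemma pI_qI (k : Fin m) : pI (qI hm k) = pI k := by ext; simp only [pI_val, qI_val]; omega
lemma qI_pI (k : Fin m) : qI hm (pI k) = qI hm k := by ext; simp only [pI_val, qI_val]; omega
lemma qI_qI (k : Fin m) : qI hm (qI hm k) = qI hm k := by ext; simp only [pI_val, qI_val]; omega
lemma pI_mod (k : Fin m) : (pI k).1 % 2 = 0 := by simp only [pI_val]; omega
lemma qI_mod (k : Fin m) : (qI hm k).1 % 2 = 1 := by simp only [qI_val]; omega
lemma pI_of_even {k : Fin m} (h : k.1 % 2 = 0) : pI k = k := by ext; simp only [pI_val]; omega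
lemma qI_of_odd {k : Fin m} (h : k.1 % 2 = 1) : qI hm k = k := by ext; simp only [qI_val]; omega
lemma pI_pair (j : Fin (m / 2)) (i : Fin 2) :
    pI (pairEquiv hm (j, i)) = pairEquiv hm (j, 0) := by
  have := i.2; ext; simp only [pI_val, pairEquiv_val]; omega
lemma qI_pair (j : Fin (m / 2)) (i : Fin 2) :
    qI hm (pairEquiv hm (j, i)) = pairEquiv hm (j, 1) := by
  have := i.2; ext; simp only [qI_val, pairEquiv_val]; omega
lemma pair0_mod (j : Fin (m / 2)) : ((pairEquiv hm (j, 0)).1) % 2 = 0 := by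
  simp only [pairEquiv_val]; omega
lemma pair1_mod (j : Fin (m / 2)) : ((pairEquiv hm (j, 1)).1) % 2 = 1 := by
  simp only [pairEquiv_val]; omega

lemma sum_pair {M : Type*} [AddCommMonoid M] (f : Fin m → M) :
    ∑ k, f k = ∑ j : Fin (m / 2), (f (pairEquiv hm (j, 0)) + f (pairEquiv hm (j, 1))) := by
  rw [← Equiv.sum_comp (pairEquiv hm) f, Fintype.sum_prod_type]
  refine Finset.sum_congr rfl fun j _ => ?_
  simp [Fin.sum_univ_two]

variable (a : ℝ)

/-- pair complex coordinate of `z` -/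
def Cz (z : Fin m → ℂ) (k : Fin m) : ℂ := z (pI k) + I * z (qI hm k)

/-- pair complex coordinate of `√a • v` -/
def cV (v : EuclideanSpace ℝ (Fin m)) (k : Fin m) : ℂ :=
  (Real.sqrt a : ℂ) * ((v (pI k) : ℂ) + I * (v (qI hm k) : ℂ))

def Fv (z : Fin m → ℂ) : EuclideanSpace ℝ (Fin m) :=
  WithLp.toLp 2 fun k => (if k.1 % 2 = 0 then (Cz hm z k).re else (Cz hm z k).im) / Real.sqrt a

def Fw (z : Fin m → ℂ) : ℂ := (∑ k, z k ^ 2) / (a : ℂ)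

def Gz (v : EuclideanSpace ℝ (Fin m)) (w : ℂ) (k : Fin m) : ℂ :=
  if k.1 % 2 = 0 then (cV hm a v k + w * (starRingEnd ℂ) (cV hm a v k)) / 2
  else (cV hm a v k - w * (starRingEnd ℂ) (cV hm a v k)) / (2 * I)

lemma Cz_pI (z : Fin m → ℂ) (k : Fin m) : Cz hm z (pI k) = Cz hm z k := by
  unfold Cz; rw [pI_pI, qI_pI]
lemma Cz_qI (z : Fin m → ℂ) (k : Fin m) : Cz hm z (qI hm k) = Cz hm z k := by
  unfold Cz; rw [pI_qI, qI_qI]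
lemma cV_pI (v : EuclideanSpace ℝ (Fin m)) (k : Fin m) : cV hm a v (pI k) = cV hm a v k := by
  unfold cV; rw [pI_pI, qI_pI]
lemma cV_qI (v : EuclideanSpace ℝ (Fin m)) (k : Fin m) : cV hm a v (qI hm k) = cV hm a v k := by
  unfold cV; rw [pI_qI, qI_qI]

lemma cont_Fv : Continuous fun z : Fin m → ℂ => Fv hm a z := by
  show Continuous fun z => (PiLp.continuousLinearEquiv 2 ℝ (fun _ : Fin m => ℝ)).symm
    (fun k => (if k.1 % 2 = 0 then (Cz hm z k).re else (Cz hm z k).im) / Real.sqrt a)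
  refine (PiLp.continuousLinearEquiv 2 ℝ (fun _ : Fin m => ℝ)).symm.continuous.comp ?_
  refine continuous_pi fun k => ?_
  unfold Cz
  split_ifs <;> fun_prop

lemma cont_Fw : Continuous fun z : Fin m → ℂ => Fw a z := by
  unfold Fw
  fun_prop

lemma cont_Gz : Continuous fun x : EuclideanSpace ℝ (Fin m) × ℂ => Gz hm a x.1 x.2 := by
  refine continuous_pi fun k => ?_
  have hv : ∀ i : Fin m, Continuous fun x : EuclideanSpace ℝ (Fin m) × ℂ => ((x.1 i : ℝ) : ℂ) := by
    intro i
    exact Complex.continuous_ofReal.comp ((EuclideanSpace.proj i).continuous.comp continuous_fst)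
  have hconj : Continuous fun x : ℂ => (starRingEnd ℂ) x := Complex.continuous_conj
  unfold Gz cV
  split_ifs <;> fun_prop

/- small complex arithmetic helpers -/
lemma normSq_mk' (x y : ℝ) : normSq ((x : ℂ) + I * y) = x ^ 2 + y ^ 2 := by
  simp [normSq_apply]
  ring

@[simp] lemma re_mk' (x y : ℝ) : ((x : ℂ) + I * y).re = x := by simp
@[simp] lemma im_mk' (x y : ℝ) : ((x : ℂ) + I * y).im = y := by simp

lemma sum_zsq (α : ℂ) (u : Fin m → ℝ) (z : Fin m → ℂ) (hz : ∀ k, z k = α * u k)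
    (hu : ∑ k, u k ^ 2 = a) : ∑ k, z k ^ 2 = α ^ 2 * a := by
  have h1 : ∀ k : Fin m, z k ^ 2 = α ^ 2 * ((u k : ℝ) : ℂ) ^ 2 := fun k => by rw [hz]; ring
  calc ∑ k, z k ^ 2 = ∑ k, α ^ 2 * ((u k : ℝ) : ℂ) ^ 2 := Finset.sum_congr rfl fun k _ => h1 k
    _ = α ^ 2 * ∑ k, ((u k : ℝ) : ℂ) ^ 2 := by rw [Finset.mul_sum]
    _ = α ^ 2 * a := by
        congr 1
        rw [← hu]
        push_cast
        ring


section Fwd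

variable {m : ℕ}

lemma hCz_fwd (hm : Even m) (θ : ℝ) (u : Fin m → ℝ) (z : Fin m → ℂ)
    (hz : ∀ k, z k = Complex.exp ((θ : ℂ) * I) * (u k : ℂ)) (k : Fin m) :
    Cz hm z k = Complex.exp ((θ : ℂ) * I) * ((u (pI k) : ℂ) + I * (u (qI hm k) : ℂ)) := by
  unfold Cz; rw [hz, hz]; ring

lemma normSq_Cz_fwd (hm : Even m) (θ : ℝ) (u : Fin m → ℝ) (z : Fin m → ℂ)
    (hz : ∀ k, z k = Complex.exp ((θ : ℂ) * I) * (u k : ℂ)) (k : Fin m) :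
    (Cz hm z k).re ^ 2 + (Cz hm z k).im ^ 2 = u (pI k) ^ 2 + u (qI hm k) ^ 2 := by
  have h1 : (Cz hm z k).re ^ 2 + (Cz hm z k).im ^ 2 = normSq (Cz hm z k) := by
    rw [normSq_apply]; ring
  rw [h1, hCz_fwd hm θ u z hz, normSq_mul, normSq_mk',
    Complex.normSq_eq_norm_sq, Complex.norm_exp_ofReal_mul_I]
  norm_num

lemma fwdA (hm : Even m) (a : ℝ) (ha : 0 < a) (θ : ℝ) (u : Fin m → ℝ) (z : Fin m → ℂ)
    (hz : ∀ k, z k = Complex.exp ((θ : ℂ) * I) * (u k : ℂ)) (hu : ∑ k, u k ^ 2 = a) :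
    ∑ k, (Fv hm a z k) ^ 2 = 1 := by
  have hs2 : Real.sqrt a ^ 2 = a := Real.sq_sqrt ha.le
  calc ∑ k, (Fv hm a z k) ^ 2
      = ∑ j : Fin (m/2), ((Fv hm a z (pairEquiv hm (j,0))) ^ 2
          + (Fv hm a z (pairEquiv hm (j,1))) ^ 2) := sum_pair hm _
    _ = ∑ j : Fin (m/2), ((u (pairEquiv hm (j,0)) ^ 2 + u (pairEquiv hm (j,1)) ^ 2) / a) := by
        refine Finset.sum_congr rfl fun j _ => ?_
        have h0 : Fv hm a z (pairEquiv hm (j,0))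
            = (Cz hm z (pairEquiv hm (j,0))).re / Real.sqrt a := by
          unfold Fv; simp only [PiLp.toLp_apply]; rw [if_pos (pair0_mod hm j)]
        have h1 : Fv hm a z (pairEquiv hm (j,1))
            = (Cz hm z (pairEquiv hm (j,0))).im / Real.sqrt a := by
          unfold Fv; simp only [PiLp.toLp_apply]
          rw [if_neg (by rw [pair1_mod hm j]; omega)]
          congr 1
          unfold Cz
          rw [pI_pair, qI_pair, pI_pair, qI_pair]
        have h2 := normSq_Cz_fwd hm θ u z hz (pairEquiv hm (j,0))
        rw [pI_pair, qI_pair] at h2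
        rw [h0, h1, div_pow, div_pow, hs2, ← add_div, h2]
    _ = (∑ k, u k ^ 2) / a := by
        rw [← Finset.sum_div, ← sum_pair hm (fun k => u k ^ 2)]
    _ = 1 := by rw [hu]; field_simp

lemma fwdB (a : ℝ) (ha : 0 < a) (θ : ℝ) (u : Fin m → ℝ) (z : Fin m → ℂ)
    (hz : ∀ k, z k = Complex.exp ((θ : ℂ) * I) * (u k : ℂ)) (hu : ∑ k, u k ^ 2 = a) :
    Fw a z = Complex.exp ((θ : ℂ) * I) ^ 2 := by
  unfold Fw
  rw [sum_zsq a _ u z hz hu]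
  have : (a : ℂ) ≠ 0 := Complex.ofReal_ne_zero.2 ha.ne'
  field_simp

lemma fwdC (hm : Even m) (a : ℝ) (ha : 0 < a) (θ : ℝ) (u : Fin m → ℝ) (z : Fin m → ℂ)
    (hz : ∀ k, z k = Complex.exp ((θ : ℂ) * I) * (u k : ℂ)) (hu : ∑ k, u k ^ 2 = a) :
    Gz hm a (Fv hm a z) (Fw a z) = z := by
  have hs : (0:ℝ) < Real.sqrt a := Real.sqrt_pos.2 ha
  obtain ⟨α, hα⟩ : ∃ α, Complex.exp ((θ : ℂ) * I) = α := ⟨_, rfl⟩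
  have habs : ‖α‖ = 1 := by rw [← hα]; exact Complex.norm_exp_ofReal_mul_I θ
  have hnormSq : normSq α = 1 := by rw [Complex.normSq_eq_norm_sq, habs]; norm_num
  have hαconj : α * (starRingEnd ℂ) α = 1 := by
    rw [Complex.mul_conj, hnormSq]; norm_num
  have hw : Fw a z = α ^ 2 := by rw [fwdB a ha θ u z hz hu, hα]
  have hzα : ∀ k, z k = α * u k := fun k => by rw [hz, hα]
  have hC : ∀ k, Cz hm z k = α * ((u (pI k) : ℂ) + I * (u (qI hm k) : ℂ)) := fun k => by
    rw [hCz_fwd hm θ u z hz, hα]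
  have hcV : ∀ k, cV hm a (Fv hm a z) k = Cz hm z k := by
    intro k
    unfold cV
    have h0 : Fv hm a z (pI k) = (Cz hm z k).re / Real.sqrt a := by
      unfold Fv; simp only [PiLp.toLp_apply]; rw [if_pos (pI_mod k), Cz_pI]
    have h1 : Fv hm a z (qI hm k) = (Cz hm z k).im / Real.sqrt a := by
      unfold Fv; simp only [PiLp.toLp_apply]; rw [if_neg (by rw [qI_mod hm k]; omega), Cz_qI]
    rw [h0, h1]
    have hsne : ((Real.sqrt a : ℝ) : ℂ) ≠ 0 := Complex.ofReal_ne_zero.2 hs.ne'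
    obtain ⟨x, hx⟩ : ∃ x, (Cz hm z k).re = x := ⟨_, rfl⟩
    obtain ⟨y, hy⟩ : ∃ y, (Cz hm z k).im = y := ⟨_, rfl⟩
    have hre : (x : ℂ) + y * I = Cz hm z k := by
      rw [← hx, ← hy]; exact Complex.re_add_im _
    rw [hx, hy, ← hre]
    push_cast
    field_simp
  funext k
  unfold Gz
  rw [hcV, hw]
  have hconjC : (starRingEnd ℂ) (Cz hm z k)
      = (starRingEnd ℂ) α * ((u (pI k) : ℂ) - I * (u (qI hm k) : ℂ)) := by
    rw [hC, map_mul, map_add, map_mul, Complex.conj_I,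
      Complex.conj_ofReal, Complex.conj_ofReal]
    ring
  rcases Nat.even_or_odd k.1 with h | h
  · have h2 : k.1 % 2 = 0 := Nat.even_iff.1 h
    rw [if_pos h2, hzα k, hconjC, hC]
    rw [show pI k = k from pI_of_even h2]
    linear_combination (α * ((u k : ℂ) - I * (u (qI hm k) : ℂ)) / 2) * hαconj
  · have h2 : k.1 % 2 = 1 := Nat.odd_iff.1 h
    rw [if_neg (by omega), hzα k]
    have htwoI : (2 * I : ℂ) ≠ 0 := by simp [Complex.I_ne_zero]
    rw [div_eq_iff htwoI, hconjC, hC]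
    rw [show qI hm k = k from qI_of_odd hm h2]
    linear_combination (α * (I * (u k : ℂ) - (u (pI k) : ℂ))) * hαconj

end Fwd


section Bwd

variable {m : ℕ}

def αB (w : ℂ) : ℂ := Complex.exp (((w.arg / 2 : ℝ) : ℂ) * I)

def uB (hm : Even m) (a : ℝ) (v : EuclideanSpace ℝ (Fin m)) (w : ℂ) : Fin m → ℝ :=
  fun k => if k.1 % 2 = 0 then ((starRingEnd ℂ) (αB w) * cV hm a v k).re
    else ((starRingEnd ℂ) (αB w) * cV hm a v k).im

lemma αB_abs (w : ℂ) : ‖αB w‖ = 1 := Complex.norm_exp_ofReal_mul_I _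

lemma αB_conj (w : ℂ) : αB w * (starRingEnd ℂ) (αB w) = 1 := by
  rw [Complex.mul_conj, Complex.normSq_eq_norm_sq, αB_abs]; norm_num

lemma αB_sq (w : ℂ) (hw : ‖w‖ = 1) : αB w ^ 2 = w := by
  have h1 : Complex.exp ((w.arg : ℂ) * I) = w := by
    have h := Complex.norm_mul_exp_arg_mul_I w
    rwa [hw, Complex.ofReal_one, one_mul] at h
  have h2 : ((2:ℕ):ℂ) * (((w.arg / 2 : ℝ) : ℂ) * I) = (w.arg : ℂ) * I := by
    push_cast; ring
  rw [αB, ← Complex.exp_nat_mul, h2, h1]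

lemma cV_pair (hm : Even m) (a : ℝ) (v : EuclideanSpace ℝ (Fin m)) (j : Fin (m / 2)) (i : Fin 2) :
    cV hm a v (pairEquiv hm (j, i)) = cV hm a v (pairEquiv hm (j, 0)) := by
  unfold cV; rw [pI_pair, qI_pair, pI_pair, qI_pair]

lemma cV_re (hm : Even m) (a : ℝ) (v : EuclideanSpace ℝ (Fin m)) (k : Fin m) :
    (cV hm a v k).re = Real.sqrt a * v (pI k) := by
  simp [cV]

lemma cV_im (hm : Even m) (a : ℝ) (v : EuclideanSpace ℝ (Fin m)) (k : Fin m) :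
    (cV hm a v k).im = Real.sqrt a * v (qI hm k) := by
  simp [cV]

lemma bwdD (hm : Even m) (a : ℝ) (v : EuclideanSpace ℝ (Fin m)) (w : ℂ)
    (hw : ‖w‖ = 1) (k : Fin m) :
    Gz hm a v w k = αB w * ((uB hm a v w k : ℝ) : ℂ) := by
  have hαconj := αB_conj w
  have hα2 := αB_sq w hw
  unfold Gz uB
  rcases Nat.even_or_odd k.1 with h | h
  · have h2 : k.1 % 2 = 0 := Nat.even_iff.1 h
    rw [if_pos h2, if_pos h2]
    have hX := Complex.add_conj ((starRingEnd ℂ) (αB w) * cV hm a v k)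
    rw [map_mul, Complex.conj_conj] at hX
    push_cast at hX
    linear_combination (αB w / 2) * hX - (cV hm a v k / 2) * hαconj
      - ((starRingEnd ℂ) (cV hm a v k) / 2) * hα2
  · have h2 : k.1 % 2 = 1 := Nat.odd_iff.1 h
    rw [if_neg (by omega), if_neg (by omega)]
    have hX := Complex.sub_conj ((starRingEnd ℂ) (αB w) * cV hm a v k)
    rw [map_mul, Complex.conj_conj] at hX
    push_cast at hX
    have htwoI : (2 * I : ℂ) ≠ 0 := by simp [Complex.I_ne_zero]
    rw [div_eq_iff htwoI]
    linear_combination (αB w) * hX - (cV hm a v k) * hαconj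
      + ((starRingEnd ℂ) (cV hm a v k)) * hα2

lemma bwdE (hm : Even m) (a : ℝ) (ha : 0 < a) (v : EuclideanSpace ℝ (Fin m))
    (hv : ∑ k, v k ^ 2 = 1) (w : ℂ) : ∑ k, uB hm a v w k ^ 2 = a := by
  calc ∑ k, uB hm a v w k ^ 2
      = ∑ j : Fin (m/2), ((uB hm a v w (pairEquiv hm (j,0))) ^ 2
          + (uB hm a v w (pairEquiv hm (j,1))) ^ 2) := sum_pair hm _
    _ = ∑ j : Fin (m/2), (a * (v (pairEquiv hm (j,0)) ^ 2 + v (pairEquiv hm (j,1)) ^ 2)) := by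
        refine Finset.sum_congr rfl fun j _ => ?_
        have h0 : uB hm a v w (pairEquiv hm (j,0))
            = ((starRingEnd ℂ) (αB w) * cV hm a v (pairEquiv hm (j,0))).re := by
          unfold uB; rw [if_pos (pair0_mod hm j)]
        have h1 : uB hm a v w (pairEquiv hm (j,1))
            = ((starRingEnd ℂ) (αB w) * cV hm a v (pairEquiv hm (j,0))).im := by
          unfold uB
          rw [if_neg (by rw [pair1_mod hm j]; omega), cV_pair]
        rw [h0, h1]
        have hn : ((starRingEnd ℂ) (αB w) * cV hm a v (pairEquiv hm (j,0))).re ^ 2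
            + ((starRingEnd ℂ) (αB w) * cV hm a v (pairEquiv hm (j,0))).im ^ 2
            = normSq ((starRingEnd ℂ) (αB w) * cV hm a v (pairEquiv hm (j,0))) := by
          rw [normSq_apply]; ring
        rw [hn, normSq_mul, normSq_conj, Complex.normSq_eq_norm_sq, αB_abs]
        unfold cV
        rw [normSq_mul, normSq_mk', pI_pair, qI_pair]
        have : normSq ((Real.sqrt a : ℝ) : ℂ) = a := by
          rw [normSq_ofReal, Real.mul_self_sqrt ha.le]
        rw [this]
        norm_num
    _ = a * ∑ j : Fin (m/2), (v (pairEquiv hm (j,0)) ^ 2 + v (pairEquiv hm (j,1)) ^ 2) := by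
        rw [Finset.mul_sum]
    _ = a := by rw [← sum_pair hm (fun k => v k ^ 2), hv, mul_one]

lemma bwdF (hm : Even m) (a : ℝ) (ha : 0 < a) (v : EuclideanSpace ℝ (Fin m))
    (w : ℂ) (hw : ‖w‖ = 1) : Fv hm a (Gz hm a v w) = v := by
  have hs : (0:ℝ) < Real.sqrt a := Real.sqrt_pos.2 ha
  have hCzG : ∀ k, Cz hm (Gz hm a v w) k = cV hm a v k := by
    intro k
    unfold Cz
    rw [bwdD hm a v w hw (pI k), bwdD hm a v w hw (qI hm k)]
    unfold uB
    rw [if_pos (pI_mod k), if_neg (by rw [qI_mod hm k]; omega), cV_pI, cV_qI]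
    have hri := Complex.re_add_im ((starRingEnd ℂ) (αB w) * cV hm a v k)
    linear_combination (αB w) * hri + (cV hm a v k) * (αB_conj w)
  ext k
  unfold Fv; simp only [PiLp.toLp_apply]
  rw [hCzG k]
  rcases Nat.even_or_odd k.1 with h | h
  · have h2 : k.1 % 2 = 0 := Nat.even_iff.1 h
    rw [if_pos h2, cV_re, pI_of_even h2, mul_div_cancel_left₀ _ hs.ne']
  · have h2 : k.1 % 2 = 1 := Nat.odd_iff.1 h
    rw [if_neg (by omega), cV_im, qI_of_odd hm h2, mul_div_cancel_left₀ _ hs.ne']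

lemma bwdG (hm : Even m) (a : ℝ) (ha : 0 < a) (v : EuclideanSpace ℝ (Fin m))
    (hv : ∑ k, v k ^ 2 = 1) (w : ℂ) (hw : ‖w‖ = 1) :
    Fw a (Gz hm a v w) = w := by
  unfold Fw
  rw [sum_zsq a (αB w) (uB hm a v w) _ (bwdD hm a v w hw) (bwdE hm a ha v hv w), αB_sq w hw]
  have : (a : ℂ) ≠ 0 := Complex.ofReal_ne_zero.2 ha.ne'
  field_simp

end Bwd

section NormHelp

variable {m : ℕ}

lemma norm_sq_sum (v : EuclideanSpace ℝ (Fin m)) :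
    (∑ k, ‖v k‖ ^ 2) = ∑ k, v k ^ 2 :=
  Finset.sum_congr rfl fun k _ => by rw [Real.norm_eq_abs, _root_.sq_abs]

lemma norm_eq_one_of_sum (v : EuclideanSpace ℝ (Fin m)) (h : ∑ k, v k ^ 2 = 1) : ‖v‖ = 1 := by
  rw [EuclideanSpace.norm_eq, norm_sq_sum, h, Real.sqrt_one]

lemma sum_eq_one_of_norm (v : EuclideanSpace ℝ (Fin m)) (h : ‖v‖ = 1) : ∑ k, v k ^ 2 = 1 := by
  rw [EuclideanSpace.norm_eq, norm_sq_sum] at h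
  have h0 : (0:ℝ) ≤ ∑ k, v k ^ 2 := Finset.sum_nonneg fun k _ => sq_nonneg _
  have h1 := Real.sq_sqrt h0
  rw [h] at h1
  linarith [h1]

end NormHelp

end
end Stmt15

set_option maxHeartbeats 2000000 in
/-- For even `m ≥ 2` and `a > 0`, the manifold
`N = {z ∈ ℂᵐ : z = e^{iθ}u, u ∈ ℝᵐ, ∑ u_k² = a}` (the real sphere spread by the diagonal
circle) is homeomorphic to `S^{m-1} × S¹`. -/
theorem stmt_15 (m : ℕ) (hm : 2 ≤ m) (hme : Even m) (a : ℝ) (ha : 0 < a) :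
    Nonempty
      ({z : Fin m → ℂ | ∃ (θ : ℝ) (u : Fin m → ℝ),
          (∀ k, z k = Complex.exp ((θ : ℂ) * Complex.I) * (u k : ℂ)) ∧
          (∑ k, u k ^ 2) = a} ≃ₜ
        (Metric.sphere (0 : EuclideanSpace ℝ (Fin m)) 1 × Metric.sphere (0 : ℂ) 1)) := by
  classical
  open Complex Stmt15 in
  refine ⟨{
    toFun := fun z => (⟨Stmt15.Fv hme a z.1, ?_⟩, ⟨Stmt15.Fw a z.1, ?_⟩),
    invFun := fun x => ⟨Stmt15.Gz hme a x.1.1 x.2.1, ?_⟩,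
    left_inv := ?_,
    right_inv := ?_,
    continuous_toFun := ?_,
    continuous_invFun := ?_ }⟩
  · obtain ⟨z, θ, u, hz, hu⟩ := z
    rw [mem_sphere_zero_iff_norm]
    exact Stmt15.norm_eq_one_of_sum _ (Stmt15.fwdA hme a ha θ u z hz hu)
  · obtain ⟨z, θ, u, hz, hu⟩ := z
    rw [mem_sphere_zero_iff_norm, Stmt15.fwdB a ha θ u z hz hu]
    rw [norm_pow, Complex.norm_exp_ofReal_mul_I]
    norm_num
  · obtain ⟨⟨v, hv⟩, ⟨w, hw⟩⟩ := x
    have hw' : ‖w‖ = 1 := by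
      exact mem_sphere_zero_iff_norm.1 hw
    exact ⟨w.arg / 2, Stmt15.uB hme a v w,
      Stmt15.bwdD hme a v w hw', Stmt15.bwdE hme a ha v
        (Stmt15.sum_eq_one_of_norm v (mem_sphere_zero_iff_norm.1 hv)) w⟩
  · rintro ⟨z, θ, u, hz, hu⟩
    exact Subtype.ext (Stmt15.fwdC hme a ha θ u z hz hu)
  · rintro ⟨⟨v, hv⟩, ⟨w, hw⟩⟩
    have hv' : ∑ k, v k ^ 2 = 1 :=
      Stmt15.sum_eq_one_of_norm v (mem_sphere_zero_iff_norm.1 hv)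
    have hw' : ‖w‖ = 1 := by
      exact mem_sphere_zero_iff_norm.1 hw
    refine Prod.ext ?_ ?_
    · exact Subtype.ext (Stmt15.bwdF hme a ha v w hw')
    · exact Subtype.ext (Stmt15.bwdG hme a ha v hv' w hw')
  · refine Continuous.prodMk ?_ ?_
    · exact Continuous.subtype_mk ((Stmt15.cont_Fv hme a).comp continuous_subtype_val) _
    · exact Continuous.subtype_mk ((Stmt15.cont_Fw a).comp continuous_subtype_val) _
  · refine Continuous.subtype_mk ?_ _
    exact (Stmt15.cont_Gz hme a).comp
      ((continuous_subtype_val.comp continuous_fst).prodMk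
        (continuous_subtype_val.comp continuous_snd))
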